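/- arXiv:2106.02682 — 3 statements merged into one kernel-verified Lean document; each statement's English description precedes it below -/
import Mathlib

section
/- Let n be a finite type, C : Matrix n n ℂ Hermitian with spectral decomposition C = U * D * Uᴴ where U is unitary and D is the real diagonal matrix of eigenvalues. Define C₊ = U * D₊ * Uᴴ, where D₊ is the diagonal matrix whose entries are max(λ, 0) for the eigenvalues λ of C. Then C₊ is positive semidefinite, for every positive semidefinite S : Matrix n n ℂ one has ‖C₊ − C‖_F ≤ ‖S − C‖_F (Frobenius norm), and equality holds only for S = C₊. In other words, C₊ is the unique nearest positive semidefinite matrix to C in Frobenius norm. -/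
open Matrix
open scoped ComplexOrder

/-- Frobenius norm of a complex matrix. -/
noncomputable def frobNorm {n : Type*} [Fintype n] (M : Matrix n n ℂ) : ℝ :=
  Real.sqrt (∑ x, ∑ y, ‖M x y‖ ^ 2)

theorem frob_trace' {n : Type*} [Fintype n] (M : Matrix n n ℂ) :
    (∑ x, ∑ y, ‖M x y‖ ^ 2) = ((Mᴴ * M).trace).re := by
  rw [Matrix.trace]
  simp only [diag_apply, mul_apply, conjTranspose_apply, Complex.re_sum]
  rw [Finset.sum_comm]
  congr 1; ext x; congr 1; ext y
  rw [Complex.star_def, ← Complex.normSq_eq_conj_mul_self]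
  rw [Complex.normSq_eq_norm_sq, Complex.ofReal_re]

theorem frob_conj' {n : Type*} [Fintype n] [DecidableEq n] (U : Matrix n n ℂ)
    (hU : U ∈ Matrix.unitaryGroup n ℂ) (A : Matrix n n ℂ) :
    (∑ x, ∑ y, ‖(U * A * Uᴴ) x y‖ ^ 2) = ∑ x, ∑ y, ‖A x y‖ ^ 2 := by
  rw [frob_trace', frob_trace']
  have h1 : Uᴴ * U = 1 := by
    rw [← Matrix.star_eq_conjTranspose]; exact (Matrix.mem_unitaryGroup_iff'.mp hU)
  have key : (U * A * Uᴴ)ᴴ * (U * A * Uᴴ) = U * (Aᴴ * A) * Uᴴ := by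
    simp only [conjTranspose_mul, conjTranspose_conjTranspose, Matrix.mul_assoc]
    rw [← Matrix.mul_assoc Uᴴ U, h1, Matrix.one_mul]
  rw [key, Matrix.trace_mul_cycle, ← Matrix.mul_assoc, h1, Matrix.one_mul]

lemma real_key (t e : ℝ) (ht : 0 ≤ t) : (max e 0 - e)^2 ≤ (t - e)^2 := by
  rcases le_or_gt e 0 with h | h
  · rw [max_eq_right h]; nlinarith
  · rw [max_eq_left h.le]; nlinarith

lemma real_key_eq (t e : ℝ) (ht : 0 ≤ t) (heq : (max e 0 - e)^2 = (t - e)^2) :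
    t = max e 0 := by
  rcases le_or_gt e 0 with h | h
  · rw [max_eq_right h] at *; nlinarith
  · rw [max_eq_left h.le] at *; nlinarith

/-- Setting the negative eigenvalues of a Hermitian matrix to zero yields the unique
nearest positive semidefinite matrix in Frobenius norm. -/
theorem stmt_6 {n : Type*} [Fintype n] [DecidableEq n]
    (C : Matrix n n ℂ) (hC : C.IsHermitian)
    (U : Matrix n n ℂ) (hU : U ∈ Matrix.unitaryGroup n ℂ) (d : n → ℝ)
    (hdecomp : C = U * Matrix.diagonal (fun i => (d i : ℂ)) * Uᴴ) :
    (U * Matrix.diagonal (fun i => ((max (d i) 0 : ℝ) : ℂ)) * Uᴴ).PosSemidef ∧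
    ∀ S : Matrix n n ℂ, S.PosSemidef →
      frobNorm (U * Matrix.diagonal (fun i => ((max (d i) 0 : ℝ) : ℂ)) * Uᴴ - C)
        ≤ frobNorm (S - C) ∧
      (frobNorm (U * Matrix.diagonal (fun i => ((max (d i) 0 : ℝ) : ℂ)) * Uᴴ - C)
          = frobNorm (S - C) →
        S = U * Matrix.diagonal (fun i => ((max (d i) 0 : ℝ) : ℂ)) * Uᴴ) := by
  have h1 : Uᴴ * U = 1 := by
    rw [← Matrix.star_eq_conjTranspose]; exact (Matrix.mem_unitaryGroup_iff'.mp hU)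
  have h2 : U * Uᴴ = 1 := by
    rw [← Matrix.star_eq_conjTranspose]; exact (Matrix.mem_unitaryGroup_iff.mp hU)
  set Δ : Matrix n n ℂ := Matrix.diagonal (fun i => ((max (d i) 0 : ℝ) : ℂ)) with hΔ
  set D : Matrix n n ℂ := Matrix.diagonal (fun i => ((d i : ℝ) : ℂ)) with hD
  -- PSD
  have hPSD : (U * Δ * Uᴴ).PosSemidef := by
    refine (Matrix.PosSemidef.diagonal ?_).mul_mul_conjTranspose_same U
    intro i
    simp only [Pi.zero_apply]
    rw [Complex.zero_le_real]
    exact le_max_right _ _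
  refine ⟨hPSD, fun S hS => ?_⟩
  -- key difference identities
  have hPC : U * Δ * Uᴴ - C = U * (Δ - D) * Uᴴ := by
    rw [hdecomp, Matrix.mul_sub, Matrix.sub_mul]
  set T : Matrix n n ℂ := Uᴴ * S * U with hT
  have hTpsd : T.PosSemidef := hS.conjTranspose_mul_mul_same U
  have hback : U * T * Uᴴ = S := by
    rw [hT]
    simp only [Matrix.mul_assoc]
    rw [← Matrix.mul_assoc U Uᴴ, h2, Matrix.one_mul, Matrix.mul_one]
  have hSC : S - C = U * (T - D) * Uᴴ := by
    rw [Matrix.mul_sub, Matrix.sub_mul, hback, hdecomp]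
  -- sums
  have hsum1 : (∑ x, ∑ y, ‖(U * Δ * Uᴴ - C) x y‖ ^ 2)
      = ∑ x, (max (d x) 0 - d x) ^ 2 := by
    rw [hPC, frob_conj' U hU]
    have hdiag : Δ - D = Matrix.diagonal (fun i => ((max (d i) 0 - d i : ℝ) : ℂ)) := by
      rw [hΔ, hD, Matrix.diagonal_sub]
      congr 1; ext i; push_cast; ring
    rw [hdiag]
    refine Finset.sum_congr rfl fun x _ => ?_
    rw [Finset.sum_eq_single x]
    · rw [Matrix.diagonal_apply_eq, Complex.norm_real, Real.norm_eq_abs, sq_abs]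
    · intro y _ hy
      simp [Matrix.diagonal_apply_ne' _ hy]
    · simp
  have hsum2 : (∑ x, ∑ y, ‖(S - C) x y‖ ^ 2) = ∑ x, ∑ y, ‖(T - D) x y‖ ^ 2 := by
    rw [hSC, frob_conj' U hU]
  -- diagonal entries of T
  have hTdiag : ∀ x, 0 ≤ T x x := fun x => by
    simpa [Matrix.mulVec, dotProduct, Pi.single_apply] using hTpsd.dotProduct_mulVec_nonneg (Pi.single x 1)
  have hTre : ∀ x, 0 ≤ (T x x).re := fun x => (Complex.nonneg_iff.mp (hTdiag x)).1
  have hTim : ∀ x, (T x x).im = 0 := fun x => ((Complex.nonneg_iff.mp (hTdiag x)).2).symm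
  have hdiagnorm : ∀ x, ‖(T - D) x x‖ ^ 2 = ((T x x).re - d x) ^ 2 := by
    intro x
    have : (T - D) x x = (((T x x).re - d x : ℝ) : ℂ) := by
      apply Complex.ext
      · simp [hD, Matrix.diagonal_apply_eq]
      · simp [hD, Matrix.diagonal_apply_eq, hTim x]
    rw [this, Complex.norm_real, Real.norm_eq_abs, sq_abs]
  -- chain of inequalities
  have hstep1 : ∀ x, (max (d x) 0 - d x) ^ 2 ≤ ‖(T - D) x x‖ ^ 2 := fun x => by
    rw [hdiagnorm x]; exact real_key _ _ (hTre x)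
  have hstep2 : ∀ x, ‖(T - D) x x‖ ^ 2 ≤ ∑ y, ‖(T - D) x y‖ ^ 2 := fun x =>
    Finset.single_le_sum (f := fun y => ‖(T - D) x y‖ ^ 2) (fun y _ => by positivity)
      (Finset.mem_univ x)
  have hsumle : (∑ x, (max (d x) 0 - d x) ^ 2) ≤ ∑ x, ∑ y, ‖(T - D) x y‖ ^ 2 :=
    Finset.sum_le_sum fun x _ => (hstep1 x).trans (hstep2 x)
  constructor
  · unfold frobNorm
    apply Real.sqrt_le_sqrt
    rw [hsum1, hsum2]
    exact hsumle
  · intro heq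
    unfold frobNorm at heq
    have hsums : (∑ x, (max (d x) 0 - d x) ^ 2) = ∑ x, ∑ y, ‖(T - D) x y‖ ^ 2 := by
      have ha : (0:ℝ) ≤ ∑ x, ∑ y, ‖(U * Δ * Uᴴ - C) x y‖ ^ 2 := by positivity
      have hb : (0:ℝ) ≤ ∑ x, ∑ y, ‖(S - C) x y‖ ^ 2 := by positivity
      rw [← hsum1, ← hsum2, ← Real.sq_sqrt ha, ← Real.sq_sqrt hb, heq]
    -- equality in the middle chain
    have hmid : (∑ x, (max (d x) 0 - d x) ^ 2) = ∑ x, ‖(T - D) x x‖ ^ 2 := by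
      refine le_antisymm (Finset.sum_le_sum fun x _ => hstep1 x) ?_
      rw [hsums]
      exact Finset.sum_le_sum fun x _ => hstep2 x
    have htop : (∑ x, ‖(T - D) x x‖ ^ 2) = ∑ x, ∑ y, ‖(T - D) x y‖ ^ 2 := by
      rw [← hsums, hmid]
    -- termwise: diagonal equalities
    have hterm : ∀ x, (max (d x) 0 - d x) ^ 2 = ‖(T - D) x x‖ ^ 2 := by
      intro x
      have := (Finset.sum_eq_sum_iff_of_le (fun x _ => hstep1 x)).mp hmid
      exact this x (Finset.mem_univ x)
    -- off-diagonal zero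
    have hoff : ∀ x y, x ≠ y → (T - D) x y = 0 := by
      intro x y hxy
      have hterm2 : ∀ x, ‖(T - D) x x‖ ^ 2 = ∑ y, ‖(T - D) x y‖ ^ 2 := by
        intro x
        have := (Finset.sum_eq_sum_iff_of_le (fun x _ => hstep2 x)).mp htop
        exact this x (Finset.mem_univ x)
      have h0 : ∑ z ∈ Finset.univ.erase x, ‖(T - D) x z‖ ^ 2 = 0 := by
        have := hterm2 x
        rw [← Finset.add_sum_erase _ _ (Finset.mem_univ x)] at this
        linarith
      have := (Finset.sum_eq_zero_iff_of_nonneg (fun z _ => by positivity)).mp h0 y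
        (Finset.mem_erase.mpr ⟨hxy.symm, Finset.mem_univ y⟩)
      have hn : ‖(T - D) x y‖ = 0 := by nlinarith [norm_nonneg ((T - D) x y)]
      exact norm_eq_zero.mp hn
    -- conclude T = Δ
    have hTΔ : T = Δ := by
      ext x y
      by_cases hxy : x = y
      · subst hxy
        have hd : (T x x).re = max (d x) 0 := by
          apply real_key_eq _ _ (hTre x)
          rw [hterm x, hdiagnorm x]
        rw [hΔ]
        simp only [Matrix.diagonal_apply_eq]
        apply Complex.ext
        · simp [hd]
        · simp [hTim x]
      · have h0 := hoff x y hxy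
        have hDxy : D x y = 0 := Matrix.diagonal_apply_ne _ hxy
        have hT0 : T x y = 0 := by simpa [Matrix.sub_apply, hDxy] using h0
        rw [hT0, hΔ, Matrix.diagonal_apply_ne _ hxy]
    rw [← hback, hTΔ]
end

section
/- Let κ and n be finite types and C : κ → Matrix n n ℂ a family of Hermitian matrices. Then the unique nearest positive semidefinite matrix (in Frobenius norm) to the block-diagonal matrix Matrix.blockDiagonal C equals Matrix.blockDiagonal (fun k => Π_{⪰0}(C k)), i.e. the positive semidefinite projection of a Hermitian block-diagonal matrix is computed blockwise. -/
open Matrix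
open scoped ComplexOrder

/-- `P` is a nearest positive semidefinite matrix to `C` in Frobenius norm. -/
noncomputable def IsNearestPSD {n : Type*} [Fintype n] [DecidableEq n]
    (C P : Matrix n n ℂ) : Prop :=
  P.PosSemidef ∧ ∀ S : Matrix n n ℂ, S.PosSemidef → frobNorm (P - C) ≤ frobNorm (S - C)

/-- Squared Frobenius norm. -/
noncomputable def frobSq {n : Type*} [Fintype n] (M : Matrix n n ℂ) : ℝ :=
  ∑ x, ∑ y, ‖M x y‖ ^ 2

lemma frobSq_nonneg {n : Type*} [Fintype n] (M : Matrix n n ℂ) : 0 ≤ frobSq M :=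
  Finset.sum_nonneg fun _ _ => Finset.sum_nonneg fun _ _ => by positivity

lemma frobSq_pos {n : Type*} [Fintype n] {M : Matrix n n ℂ} (h : M ≠ 0) : 0 < frobSq M := by
  obtain ⟨x, y, hxy⟩ : ∃ x y, M x y ≠ 0 := by
    by_contra hc
    push_neg at hc
    exact h (by ext x y; simp [hc])
  refine Finset.sum_pos' (fun _ _ => Finset.sum_nonneg fun _ _ => by positivity)
    ⟨x, Finset.mem_univ x, ?_⟩
  exact Finset.sum_pos' (fun _ _ => by positivity)
    ⟨y, Finset.mem_univ y, pow_pos (norm_pos_iff.mpr hxy) 2⟩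

lemma frobNorm_eq_sqrt_frobSq {n : Type*} [Fintype n] (M : Matrix n n ℂ) :
    frobNorm M = Real.sqrt (frobSq M) := rfl

lemma frobNorm_le_frobNorm {n : Type*} [Fintype n] {M N : Matrix n n ℂ}
    (h : frobSq M ≤ frobSq N) : frobNorm M ≤ frobNorm N := Real.sqrt_le_sqrt h

lemma frobNorm_lt_frobNorm {n : Type*} [Fintype n] {M N : Matrix n n ℂ}
    (h : frobSq M < frobSq N) : frobNorm M < frobNorm N :=
  Real.sqrt_lt_sqrt (frobSq_nonneg M) h

lemma frobSq_le_of_frobNorm_le {n : Type*} [Fintype n] {M N : Matrix n n ℂ}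
    (h : frobNorm M ≤ frobNorm N) : frobSq M ≤ frobSq N := by
  have hM : frobSq M = frobNorm M ^ 2 := (Real.sq_sqrt (frobSq_nonneg M)).symm
  have hN : frobSq N = frobNorm N ^ 2 := (Real.sq_sqrt (frobSq_nonneg N)).symm
  rw [hM, hN]
  exact pow_le_pow_left₀ (Real.sqrt_nonneg _) h 2

lemma psd_blockDiagonal {κ n : Type*} [Fintype κ] [DecidableEq κ] [Fintype n] [DecidableEq n]
    {P : κ → Matrix n n ℂ} (h : ∀ k, (P k).PosSemidef) :
    (Matrix.blockDiagonal P).PosSemidef := by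
  refine PosSemidef.of_dotProduct_mulVec_nonneg ?_ ?_
  · exact (blockDiagonal_conjTranspose P).trans (congrArg _ (funext fun k => (h k).1))
  · intro x
    have key : star x ⬝ᵥ (Matrix.blockDiagonal P) *ᵥ x
        = ∑ k, star (fun i => x (i, k)) ⬝ᵥ (P k) *ᵥ (fun i => x (i, k)) := by
      simp only [dotProduct, mulVec, Fintype.sum_prod_type, blockDiagonal_apply, ite_mul,
        zero_mul, Finset.sum_ite_eq, Finset.mem_univ, if_true, Pi.star_apply]
      exact Finset.sum_comm
    rw [key]
    exact Finset.sum_nonneg fun k _ => (h k).dotProduct_mulVec_nonneg _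

lemma frobSq_blockDiagonal {κ n : Type*} [Fintype κ] [DecidableEq κ] [Fintype n] [DecidableEq n]
    (M : κ → Matrix n n ℂ) : frobSq (Matrix.blockDiagonal M) = ∑ k, frobSq (M k) := by
  simp only [frobSq, Fintype.sum_prod_type, blockDiagonal_apply]
  rw [Finset.sum_comm]
  refine Finset.sum_congr rfl fun k _ => Finset.sum_congr rfl fun x _ => ?_
  rw [Finset.sum_comm]
  have : ∀ y : n, ∀ l : κ, ‖if k = l then M k x y else 0‖ ^ 2
      = if k = l then ‖M k x y‖ ^ 2 else 0 := by
    intro y l; by_cases h : k = l <;> simp [h]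
  simp only [this, Finset.sum_comm (γ := κ), Finset.sum_ite_eq, Finset.mem_univ, if_true]

lemma frobSq_blocks_le {κ n : Type*} [Fintype κ] [Fintype n]
    (T : Matrix (n × κ) (n × κ) ℂ) :
    ∑ k, frobSq (fun i j => T (i, k) (j, k)) ≤ frobSq T := by
  simp only [frobSq, Fintype.sum_prod_type]
  rw [show (∑ x : n, ∑ k : κ, ∑ y : n, ∑ l : κ, ‖T (x, k) (y, l)‖ ^ 2)
      = ∑ k : κ, ∑ x : n, ∑ y : n, ∑ l : κ, ‖T (x, k) (y, l)‖ ^ 2 from Finset.sum_comm]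
  refine Finset.sum_le_sum fun k _ => Finset.sum_le_sum fun x _ => Finset.sum_le_sum fun y _ => ?_
  exact Finset.single_le_sum (f := fun l => ‖T (x, k) (y, l)‖ ^ 2)
    (fun l _ => by positivity) (Finset.mem_univ k)

lemma psd_half_add {n : Type*} [Fintype n] {A B : Matrix n n ℂ}
    (hA : A.PosSemidef) (hB : B.PosSemidef) : ((2⁻¹ : ℂ) • (A + B)).PosSemidef := by
  have h2 : (0 : ℂ) ≤ 2⁻¹ := by
    rw [Complex.le_def]; norm_num
  refine PosSemidef.of_dotProduct_mulVec_nonneg ?_ ?_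
  · rw [IsHermitian, conjTranspose_smul, conjTranspose_add, hA.1, hB.1]
    norm_num
  · intro x
    rw [smul_mulVec, dotProduct_smul, smul_eq_mul]
    exact mul_nonneg h2 (by rw [add_mulVec, dotProduct_add]; exact add_nonneg (hA.dotProduct_mulVec_nonneg x) (hB.dotProduct_mulVec_nonneg x))

lemma complex_parallelogram (u v : ℂ) :
    ‖(u + v) / 2‖ ^ 2 + ‖(u - v) / 2‖ ^ 2 = (‖u‖ ^ 2 + ‖v‖ ^ 2) / 2 := by
  have h := parallelogram_law_with_norm ℝ u v
  have h1 : ‖(u + v) / 2‖ = ‖u + v‖ / 2 := by rw [norm_div]; norm_num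
  have h2 : ‖(u - v) / 2‖ = ‖u - v‖ / 2 := by rw [norm_div]; norm_num
  rw [h1, h2]
  nlinarith [h]

/-- The positive semidefinite projection of a Hermitian block-diagonal matrix is
computed blockwise: if each `P k` is the nearest PSD matrix to `C k`, then the
block-diagonal matrix of the `P k` is the unique nearest PSD matrix to the
block-diagonal matrix of the `C k`. -/
theorem stmt_8 {κ n : Type*} [Fintype κ] [DecidableEq κ] [Fintype n] [DecidableEq n]
    (C P : κ → Matrix n n ℂ) (hC : ∀ k, (C k).IsHermitian)
    (hP : ∀ k, IsNearestPSD (C k) (P k)) :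
    IsNearestPSD (Matrix.blockDiagonal C) (Matrix.blockDiagonal P) ∧
    ∀ Q : Matrix (n × κ) (n × κ) ℂ,
      IsNearestPSD (Matrix.blockDiagonal C) Q → Q = Matrix.blockDiagonal P := by
  set C' := Matrix.blockDiagonal C with hC'
  set R := Matrix.blockDiagonal P with hR
  have hRpsd : R.PosSemidef := psd_blockDiagonal fun k => (hP k).1
  have hRmin : ∀ S : Matrix (n × κ) (n × κ) ℂ, S.PosSemidef →
      frobNorm (R - C') ≤ frobNorm (S - C') := by
    intro S hS
    apply frobNorm_le_frobNorm
    have hRC : R - C' = Matrix.blockDiagonal (fun k => P k - C k) := by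
      rw [hR, hC']; exact (blockDiagonal_sub P C).symm
    rw [hRC, frobSq_blockDiagonal]
    have step : ∀ k, frobSq (P k - C k) ≤ frobSq (fun i j => (S - C') (i, k) (j, k)) := by
      intro k
      have hSk : (S.submatrix (fun i : n => (i, k)) (fun i : n => (i, k))).PosSemidef :=
        hS.submatrix _
      have h1 := frobSq_le_of_frobNorm_le ((hP k).2 _ hSk)
      have h2 : S.submatrix (fun i : n => (i, k)) (fun i : n => (i, k)) - C k
          = fun i j => (S - C') (i, k) (j, k) := by
        ext i j
        simp [hC', Matrix.sub_apply, Matrix.submatrix_apply, blockDiagonal_apply_eq]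
      rwa [h2] at h1
    calc ∑ k, frobSq (P k - C k) ≤ ∑ k, frobSq (fun i j => (S - C') (i, k) (j, k)) :=
          Finset.sum_le_sum fun k _ => step k
      _ ≤ frobSq (S - C') := frobSq_blocks_le _
  refine ⟨⟨hRpsd, hRmin⟩, ?_⟩
  rintro Q ⟨hQpsd, hQmin⟩
  by_contra hne
  have h1 : frobNorm (Q - C') ≤ frobNorm (R - C') := hQmin R hRpsd
  have h2 : frobNorm (R - C') ≤ frobNorm (Q - C') := hRmin Q hQpsd
  have heq : frobSq (Q - C') = frobSq (R - C') :=
    le_antisymm (frobSq_le_of_frobNorm_le h1) (frobSq_le_of_frobNorm_le h2)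
  set M := (2⁻¹ : ℂ) • (Q + R) with hM
  have hMpsd : M.PosSemidef := psd_half_add hQpsd hRpsd
  have key : frobSq (M - C') + frobSq ((2⁻¹ : ℂ) • (Q - R))
      = (frobSq (Q - C') + frobSq (R - C')) / 2 := by
    have pt : ∀ x y, ‖(M - C') x y‖ ^ 2 + ‖((2⁻¹ : ℂ) • (Q - R)) x y‖ ^ 2
        = (‖(Q - C') x y‖ ^ 2 + ‖(R - C') x y‖ ^ 2) / 2 := by
      intro x y
      have e1 : (M - C') x y = ((Q - C') x y + (R - C') x y) / 2 := by
        simp only [hM, Matrix.sub_apply, Matrix.smul_apply, Matrix.add_apply, smul_eq_mul]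
        ring
      have e2 : ((2⁻¹ : ℂ) • (Q - R)) x y = ((Q - C') x y - (R - C') x y) / 2 := by
        simp only [Matrix.sub_apply, Matrix.smul_apply, smul_eq_mul]
        ring
      rw [e1, e2, complex_parallelogram]
    simp only [frobSq, ← Finset.sum_add_distrib, Finset.sum_div]
    exact Finset.sum_congr rfl fun x _ => Finset.sum_congr rfl fun y _ => pt x y
  have hpos : 0 < frobSq ((2⁻¹ : ℂ) • (Q - R)) :=
    frobSq_pos (smul_ne_zero (by norm_num) (sub_ne_zero.mpr hne))
  have hlt : frobSq (M - C') < frobSq (Q - C') := by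
    rw [← heq] at key
    linarith
  have := hQmin M hMpsd
  have := frobNorm_lt_frobNorm hlt
  linarith
end

section
/- Fix M ≥ 2, m ≥ 1, n ≥ 1. For i : Fin M let Hᵢ : Matrix (Fin m) (Fin m) ℝ, and for i < j let Hᵢⱼ : Matrix (Fin m × Fin m) (Fin m × Fin m) ℝ; let O i α : Matrix (Fin m) (Fin m) ℝ for α : Fin n. Let ρᵢ : Matrix (Fin m) (Fin m) ℝ be symmetric for each i, and for i < j let ρᵢⱼ : Matrix (Fin m × Fin m) (Fin m × Fin m) ℝ be symmetric; for i > j set ρᵢⱼ ((a,b),(a',b')) := ρⱼᵢ ((b,a),(b',a')). Define G : Matrix (Fin M × Fin n) (Fin M × Fin n) ℝ by G (i,α) (j,β) = trace ((O i α)ᵀ * (O i β) * ρᵢ) if i = j and G (i,α) (j,β) = trace (((O i α)ᵀ ⊗ₖ (O j β)) * ρᵢⱼ) if i ≠ j. Let X : Matrix (Fin M × Fin n) (Fin M × Fin n) ℝ be symmetric with blocks Xᵢⱼ (α,β) = X (i,α) (j,β), and define the effective Hamiltonians Hᵢ[Xᵢᵢ] = Hᵢ − ∑_{α,β} Xᵢᵢ(α,β)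 • (O i α)ᵀ * (O i β) and, for i < j, Hᵢⱼ[Xᵢⱼ] = Hᵢⱼ − ∑_{α,β} Xᵢⱼ(α,β) • ((O i α)ᵀ ⊗ₖ (O j β) + ((O i α)ᵀ ⊗ₖ (O j β))ᵀ). Then ∑ᵢ trace (Hᵢ[Xᵢᵢ] * ρᵢ) + ∑_{i<j} trace (Hᵢⱼ[Xᵢⱼ] * ρᵢⱼ) = ∑ᵢ trace (Hᵢ * ρᵢ) + ∑_{i<j} trace (Hᵢⱼ * ρᵢⱼ) − trace (X * G); consequently, if X and G are both positive semidefinite, then ∑ᵢ trace (Hᵢ[Xᵢᵢ] * ρᵢ) + ∑_{i<j} trace (Hᵢⱼ[Xᵢⱼ] * ρᵢⱼ) ≤ ∑ᵢ trace (Hᵢ * ρᵢ) + ∑_{i<j} trace (Hᵢⱼ * ρᵢⱼ). -/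
open Matrix Kronecker

lemma aux_trace_mul_eq_sum {k : Type*} [Fintype k] (X G : Matrix k k ℝ) :
    (X * G).trace = ∑ p, ∑ q, X p q * G q p := by
  simp [Matrix.trace, Matrix.mul_apply]

lemma aux_kswap {m : ℕ} (A B : Matrix (Fin m) (Fin m) ℝ)
    (ρ ρ' : Matrix (Fin m × Fin m) (Fin m × Fin m) ℝ)
    (h : ∀ a b a' b', ρ' (a, b) (a', b') = ρ (b, a) (b', a')) :
    ((A ⊗ₖ B) * ρ').trace = ((B ⊗ₖ A) * ρ).trace := by
  rw [aux_trace_mul_eq_sum, aux_trace_mul_eq_sum]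
  apply Fintype.sum_equiv (Equiv.prodComm (Fin m) (Fin m))
  rintro ⟨a, b⟩
  apply Fintype.sum_equiv (Equiv.prodComm (Fin m) (Fin m))
  rintro ⟨a', b'⟩
  simp only [Equiv.prodComm_apply, Prod.swap_prod_mk, Matrix.kroneckerMap_apply, h]
  ring

lemma aux_trace_nonneg {k : Type*} [Fintype k] [DecidableEq k]
    {X G : Matrix k k ℝ} (hX : X.PosSemidef) (hG : G.PosSemidef) :
    0 ≤ (X * G).trace := by
  open scoped MatrixOrder in
  obtain ⟨B, rfl⟩ := CStarAlgebra.nonneg_iff_eq_star_mul_self.mp hX.nonneg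
  rw [Matrix.mul_assoc, Matrix.trace_mul_comm]
  rw [Matrix.trace]
  apply Finset.sum_nonneg
  intro i _
  have h2 := hG.dotProduct_mulVec_nonneg (fun j => B i j)
  have e : (B * G * Bᴴ).diag i = star (fun j => B i j) ⬝ᵥ G *ᵥ (fun j => B i j) := by
    simp only [Matrix.diag_apply, Matrix.mul_apply, dotProduct, Matrix.mulVec,
      Matrix.conjTranspose_apply, Pi.star_apply, star_trivial, Finset.mul_sum,
      Finset.sum_mul]
    rw [Finset.sum_comm]
    apply Finset.sum_congr rfl; intro a _
    apply Finset.sum_congr rfl; intro b _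
    ring
  have : (0:ℝ) ≤ star (fun j => B i j) ⬝ᵥ G *ᵥ (fun j => B i j) := by simpa using h2
  calc (0:ℝ) ≤ star (fun j => B i j) ⬝ᵥ G *ᵥ (fun j => B i j) := this
    _ = (B * G * Bᴴ).diag i := e.symm

lemma aux_split {M : ℕ} (F : Fin M → Fin M → ℝ) :
    (∑ i, ∑ j, F i j)
      = (∑ i, F i i) + ∑ i, ∑ j, (if i < j then F i j + F j i else 0) := by
  have h1 : ∀ i j : Fin M,
      F i j = (if i = j then F i j else 0) + (if i < j then F i j else 0)
        + (if j < i then F i j else 0) := by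
    intro i j
    rcases lt_trichotomy i j with h | h | h
    · simp [h, h.ne, lt_asymm h]
    · simp [h, lt_irrefl]
    · simp [h, h.ne', lt_asymm h]
  calc (∑ i, ∑ j, F i j)
      = ∑ i, ∑ j, ((if i = j then F i j else 0) + (if i < j then F i j else 0)
          + (if j < i then F i j else 0)) := by
        exact Finset.sum_congr rfl fun i _ => Finset.sum_congr rfl fun j _ => h1 i j
    _ = (∑ i, ∑ j, if i = j then F i j else 0)
        + (∑ i, ∑ j, if i < j then F i j else 0)
        + (∑ i, ∑ j, if j < i then F i j else 0) := by
        simp [Finset.sum_add_distrib]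
    _ = (∑ i, F i i) + (∑ i, ∑ j, if i < j then F i j else 0)
        + (∑ i, ∑ j, if i < j then F j i else 0) := by
        congr 1
        · congr 1
          simp [Finset.sum_ite_eq]
        · rw [Finset.sum_comm]
    _ = (∑ i, F i i) + ∑ i, ∑ j, (if i < j then F i j + F j i else 0) := by
        rw [add_assoc, ← Finset.sum_add_distrib]
        congr 1
        apply Finset.sum_congr rfl
        intro i _
        rw [← Finset.sum_add_distrib]
        apply Finset.sum_congr rfl
        intro j _
        split <;> simp

/-- Partial dualization of the global semidefinite constraint: replacing the local
Hamiltonian terms by the effective Hamiltonians determined by a symmetric dual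
variable `X` changes the energy objective by exactly `−Tr(X G)`; consequently, if
`X` and `G` are positive semidefinite, the effective objective is a lower bound. -/
theorem stmt_18 (M m n : ℕ) (hM : 2 ≤ M) (hm : 1 ≤ m) (hn : 1 ≤ n)
    (H1 : Fin M → Matrix (Fin m) (Fin m) ℝ)
    (H2 : Fin M → Fin M → Matrix (Fin m × Fin m) (Fin m × Fin m) ℝ)
    (O : Fin M → Fin n → Matrix (Fin m) (Fin m) ℝ)
    (ρ1 : Fin M → Matrix (Fin m) (Fin m) ℝ)
    (ρ2 : Fin M → Fin M → Matrix (Fin m × Fin m) (Fin m × Fin m) ℝ)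
    (hρ1 : ∀ i, (ρ1 i).IsSymm)
    (hρ2 : ∀ i j, i < j → (ρ2 i j).IsSymm)
    (hρ2swap : ∀ i j : Fin M, j < i →
      ∀ (a b a' b' : Fin m), ρ2 i j (a, b) (a', b') = ρ2 j i (b, a) (b', a'))
    (X : Matrix (Fin M × Fin n) (Fin M × Fin n) ℝ) (hX : X.IsSymm)
    (G : Matrix (Fin M × Fin n) (Fin M × Fin n) ℝ)
    (hG : ∀ (i j : Fin M) (α β : Fin n),
      G (i, α) (j, β) =
        if i = j then ((O i α)ᵀ * O i β * ρ1 i).trace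
        else (((O i α)ᵀ ⊗ₖ O j β) * ρ2 i j).trace)
    (Heff1 : Fin M → Matrix (Fin m) (Fin m) ℝ)
    (hHeff1 : ∀ i, Heff1 i =
      H1 i - ∑ α : Fin n, ∑ β : Fin n, X (i, α) (i, β) • ((O i α)ᵀ * O i β))
    (Heff2 : Fin M → Fin M → Matrix (Fin m × Fin m) (Fin m × Fin m) ℝ)
    (hHeff2 : ∀ i j : Fin M, i < j → Heff2 i j =
      H2 i j - ∑ α : Fin n, ∑ β : Fin n, X (i, α) (j, β) •
        (((O i α)ᵀ ⊗ₖ O j β) + ((O i α)ᵀ ⊗ₖ O j β)ᵀ)) :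
    ((∑ i, (Heff1 i * ρ1 i).trace)
        + (∑ i, ∑ j, if i < j then (Heff2 i j * ρ2 i j).trace else 0)
      = (∑ i, (H1 i * ρ1 i).trace)
        + (∑ i, ∑ j, if i < j then (H2 i j * ρ2 i j).trace else 0)
        - (X * G).trace) ∧
    (X.PosSemidef → G.PosSemidef →
      (∑ i, (Heff1 i * ρ1 i).trace)
          + (∑ i, ∑ j, if i < j then (Heff2 i j * ρ2 i j).trace else 0)
        ≤ (∑ i, (H1 i * ρ1 i).trace)
          + (∑ i, ∑ j, if i < j then (H2 i j * ρ2 i j).trace else 0)) := by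
  have hXs : ∀ p q, X p q = X q p := fun p q => hX.apply q p
  set F : Fin M → Fin M → ℝ :=
    fun i j => ∑ α, ∑ β, X (i, α) (j, β) * G (j, β) (i, α) with hF
  have hH1exp : ∀ i, (Heff1 i * ρ1 i).trace
      = (H1 i * ρ1 i).trace
        - ∑ α, ∑ β, X (i, α) (i, β) * ((O i α)ᵀ * O i β * ρ1 i).trace := by
    intro i
    rw [hHeff1 i, Matrix.sub_mul, Matrix.trace_sub, Matrix.sum_mul, Matrix.trace_sum]
    congr 1
    apply Finset.sum_congr rfl; intro α _
    rw [Matrix.sum_mul, Matrix.trace_sum]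
    apply Finset.sum_congr rfl; intro β _
    rw [Matrix.smul_mul, Matrix.trace_smul, smul_eq_mul]
  have hH2exp : ∀ i j : Fin M, i < j → (Heff2 i j * ρ2 i j).trace
      = (H2 i j * ρ2 i j).trace - ∑ α, ∑ β, X (i, α) (j, β) *
          ((((O i α)ᵀ ⊗ₖ O j β) * ρ2 i j).trace
            + ((((O i α)ᵀ ⊗ₖ O j β)ᵀ) * ρ2 i j).trace) := by
    intro i j hij
    rw [hHeff2 i j hij, Matrix.sub_mul, Matrix.trace_sub, Matrix.sum_mul,
      Matrix.trace_sum]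
    congr 1
    apply Finset.sum_congr rfl; intro α _
    rw [Matrix.sum_mul, Matrix.trace_sum]
    apply Finset.sum_congr rfl; intro β _
    rw [Matrix.smul_mul, Matrix.trace_smul, smul_eq_mul, Matrix.add_mul,
      Matrix.trace_add]
  have hTr : (X * G).trace = ∑ i, ∑ j, F i j := by
    rw [aux_trace_mul_eq_sum]
    simp only [Fintype.sum_prod_type, hF]
    apply Finset.sum_congr rfl; intro i _
    exact Finset.sum_comm
  have hdiag : ∀ i, F i i
      = ∑ α, ∑ β, X (i, α) (i, β) * ((O i α)ᵀ * O i β * ρ1 i).trace := by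
    intro i
    rw [hF]
    rw [Finset.sum_comm]
    apply Finset.sum_congr rfl; intro α _
    apply Finset.sum_congr rfl; intro β _
    congr 1
    · exact hXs _ _
    · rw [hG i i β α, if_pos rfl]
  have hoff : ∀ i j : Fin M, i < j → F i j + F j i
      = ∑ α, ∑ β, X (i, α) (j, β) *
          ((((O i α)ᵀ ⊗ₖ O j β) * ρ2 i j).trace
            + ((((O i α)ᵀ ⊗ₖ O j β)ᵀ) * ρ2 i j).trace) := by
    intro i j hij
    have hne : i ≠ j := ne_of_lt hij
    have h1 : F i j = ∑ α, ∑ β, X (i, α) (j, β) *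
        ((((O i α)ᵀ ⊗ₖ O j β)ᵀ) * ρ2 i j).trace := by
      rw [hF]
      apply Finset.sum_congr rfl; intro α _
      apply Finset.sum_congr rfl; intro β _
      congr 1
      rw [hG j i β α, if_neg hne.symm,
        ← Matrix.kroneckerMap_transpose, Matrix.transpose_transpose]
      exact aux_kswap ((O j β)ᵀ) (O i α) (ρ2 i j) (ρ2 j i)
        (fun a b a' b' => hρ2swap j i hij a b a' b')
    have h2 : F j i = ∑ α, ∑ β, X (i, α) (j, β) *
        ((((O i α)ᵀ ⊗ₖ O j β)) * ρ2 i j).trace := by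
      rw [hF]
      rw [Finset.sum_comm]
      apply Finset.sum_congr rfl; intro α _
      apply Finset.sum_congr rfl; intro β _
      rw [hXs (j, α) (i, β), hG i j β α, if_neg hne]
    rw [h1, h2, ← Finset.sum_add_distrib]
    apply Finset.sum_congr rfl; intro α _
    rw [← Finset.sum_add_distrib]
    apply Finset.sum_congr rfl; intro β _
    ring
  have main : (∑ i, (Heff1 i * ρ1 i).trace)
      + (∑ i, ∑ j, if i < j then (Heff2 i j * ρ2 i j).trace else 0)
      = (∑ i, (H1 i * ρ1 i).trace)
        + (∑ i, ∑ j, if i < j then (H2 i j * ρ2 i j).trace else 0)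
        - (X * G).trace := by
    have e1 : ∑ i, (Heff1 i * ρ1 i).trace
        = (∑ i, (H1 i * ρ1 i).trace) - ∑ i, F i i := by
      rw [← Finset.sum_sub_distrib]
      apply Finset.sum_congr rfl; intro i _
      rw [hH1exp i, hdiag i]
    have e2 : (∑ i, ∑ j, if i < j then (Heff2 i j * ρ2 i j).trace else 0)
        = (∑ i, ∑ j, if i < j then (H2 i j * ρ2 i j).trace else 0)
          - ∑ i, ∑ j, (if i < j then F i j + F j i else 0) := by
      rw [← Finset.sum_sub_distrib]
      apply Finset.sum_congr rfl; intro i _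
      rw [← Finset.sum_sub_distrib]
      apply Finset.sum_congr rfl; intro j _
      by_cases hij : i < j
      · rw [if_pos hij, if_pos hij, if_pos hij, hH2exp i j hij, hoff i j hij]
      · simp [hij]
    rw [e1, e2, hTr, aux_split F]
    ring
  refine ⟨main, fun hXp hGp => ?_⟩
  rw [main]
  linarith [aux_trace_nonneg hXp hGp]
end
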